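/- For natural numbers e ≥ f ≥ 1, the sequence c_n = H(n·e) − H(n·f) is increasing in n; that is, H((n+1)e) − H((n+1)f) ≥ H(ne) − H(nf) for all n ≥ 0. -/
import Mathlib

/-- Harmonic number H(m) = ∑_{ℓ=1}^m 1/ℓ. -/
noncomputable def H (m : ℕ) : ℝ := ∑ ℓ ∈ Finset.range m, (1 : ℝ) / (ℓ + 1)

lemma Hadd (a b : ℕ) : H (a + b) = H a + ∑ i ∈ Finset.range b, (1:ℝ)/((a:ℝ) + i + 1) := by
  unfold H
  rw [Finset.sum_range_add]
  congr 1
  refine Finset.sum_congr rfl fun i _ => ?_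
  push_cast
  ring_nf

lemma key (n m : ℕ) :
    H ((n+1)*m) - H (n*m) ≤ H ((n+1)*(m+1)) - H (n*(m+1)) := by
  rcases Nat.eq_zero_or_pos n with hn | hn
  · subst hn
    norm_num
    have h1 := Hadd m 1
    have h2 : (0:ℝ) ≤ ((m:ℝ) + 1)⁻¹ := by positivity
    simp [Finset.sum_range_one] at h1
    nlinarith [h1]
  rcases Nat.eq_zero_or_pos m with hm | hm
  · subst hm
    norm_num
    have h1 := Hadd n 1
    simp [Finset.sum_range_one] at h1
    have h2 : (0:ℝ) ≤ ((n:ℝ) + 1)⁻¹ := by positivity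
    nlinarith [h1]
  -- main case: n ≥ 1, m ≥ 1
  have e1 : (n+1)*(m+1) = (n+1)*m + (n+1) := by ring
  have e2 : n*(m+1) = n*m + n := by ring
  rw [e1, e2, Hadd ((n+1)*m) (n+1), Hadd (n*m) n]
  -- goal now: H ((n+1)*m) - (H (n*m) + S2) ≤ H ((n+1)*m) + S1 - H (n*m)
  have hNpos : (0:ℝ) < (n:ℝ) * m := by
    have : (0:ℝ) < (n:ℝ) := by exact_mod_cast hn
    have : (0:ℝ) < (m:ℝ) := by exact_mod_cast hm
    positivity
  set N : ℝ := (n:ℝ) * m with hN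
  have castN : ((n*m : ℕ) : ℝ) = N := by push_cast; ring
  have castN1 : (((n+1)*m : ℕ) : ℝ) = N + m := by push_cast; ring
  rw [castN, castN1]
  have hm1 : (1:ℝ) ≤ (m:ℝ) := by exact_mod_cast hm
  have hn1 : (1:ℝ) ≤ (n:ℝ) := by exact_mod_cast hn
  -- key sum inequality
  have hsum : ∑ i ∈ Finset.range n, ((1:ℝ)/(N + i + 1) - 1/(N + m + i + 1))
      ≤ N/((n:ℝ)+1) * ∑ i ∈ Finset.range n, ((1:ℝ)/(N + i) - 1/(N + i + 1)) := by
    rw [Finset.mul_sum]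
    refine Finset.sum_le_sum fun i hi => ?_
    have hi' : (i:ℝ) + 1 ≤ (n:ℝ) := by
      have := Finset.mem_range.mp hi
      exact_mod_cast this
    have p1 : (0:ℝ) < N + i := by positivity
    have p2 : (0:ℝ) < N + i + 1 := by positivity
    have p3 : (0:ℝ) < N + m + i + 1 := by positivity
    have p4 : (0:ℝ) < (n:ℝ) + 1 := by positivity
    have lhs_eq : (1:ℝ)/(N + i + 1) - 1/(N + m + i + 1)
        = (m:ℝ) / ((N + i + 1) * (N + m + i + 1)) := by
      field_simp <;> ring
    have rhs_eq : N/((n:ℝ)+1) * ((1:ℝ)/(N + i) - 1/(N + i + 1))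
        = N / (((n:ℝ)+1) * ((N + i) * (N + i + 1))) := by
      field_simp <;> ring
    rw [lhs_eq, rhs_eq]
    rw [div_le_div_iff₀ (by positivity) (by positivity)]
    -- m * ((n+1) * ((N+i)*(N+i+1))) ≤ N * ((N+i+1)*(N+m+i+1))
    have lin : ((n:ℝ)+1) * (N + i) ≤ (n:ℝ) * (N + m + i + 1) := by
      have : N + (i:ℝ) ≤ N + (n:ℝ) * (m + 1) - N := by nlinarith
      nlinarith
    nlinarith [mul_pos p2 p3, mul_pos p1 p2, mul_le_mul_of_nonneg_left lin (by positivity : (0:ℝ) ≤ (m:ℝ) * (N + i + 1))]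
  have htel : ∑ i ∈ Finset.range n, ((1:ℝ)/(N + i) - 1/(N + i + 1)) = 1/N - 1/(N + n) := by
    have h := Finset.sum_range_sub' (fun i => (1:ℝ)/(N + i)) n
    simp only [Nat.cast_add, Nat.cast_one, Nat.cast_zero, add_zero] at h
    rw [← h]
    exact Finset.sum_congr rfl fun i _ => by ring_nf
  have hval : N/((n:ℝ)+1) * (1/N - 1/(N + n)) = 1/(N + m + n + 1) := by
    have h1 : N ≠ 0 := ne_of_gt hNpos
    have h2 : N + (n:ℝ) ≠ 0 := by positivity
    have h3 : ((n:ℝ)+1) ≠ 0 := by positivity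
    have h4 : N + (m:ℝ) + n + 1 ≠ 0 := by positivity
    rw [hN] at h1 h2 h4 ⊢
    field_simp <;> ring
  have hfinal : ∑ i ∈ Finset.range n, ((1:ℝ)/(N + i + 1) - 1/(N + m + i + 1))
      ≤ 1/(N + m + n + 1) := by
    calc _ ≤ N/((n:ℝ)+1) * ∑ i ∈ Finset.range n, ((1:ℝ)/(N + i) - 1/(N + i + 1)) := hsum
    _ = 1/(N + m + n + 1) := by rw [htel, hval]
  rw [Finset.sum_sub_distrib] at hfinal
  rw [Finset.sum_range_succ]
  have hlast : ((n:ℝ)) + 0 = (n:ℝ) := by ring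
  -- match cast forms
  have hcast : ∀ i : ℕ, (1:ℝ)/((N + m) + i + 1) = 1/(N + m + i + 1) := fun i => by ring_nf
  have hsum1 : ∑ i ∈ Finset.range n, (1:ℝ)/((N+m) + (i:ℝ) + 1)
      = ∑ i ∈ Finset.range n, (1:ℝ)/(N + m + (i:ℝ) + 1) := by
    refine Finset.sum_congr rfl fun i _ => by ring_nf
  have hlast2 : (1:ℝ)/((N+m) + (n:ℝ) + 1) = 1/(N + m + n + 1) := by ring_nf
  linarith [hfinal, hsum1.ge, hsum1.le]

theorem stmt1 (e f : ℕ) (hf : 1 ≤ f) (hef : f ≤ e) (n : ℕ) :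
    H (n * e) - H (n * f) ≤ H ((n + 1) * e) - H ((n + 1) * f) := by
  have mono : Monotone (fun m => H ((n+1)*m) - H (n*m)) :=
    monotone_nat_of_le_succ fun m => key n m
  have := mono hef
  simp only at this
  linarith
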